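/- arXiv:2112.10560 — 9 statements merged into one kernel-verified Lean document; each statement's English description precedes it below -/
import Mathlib

section
/- For all $x, y, u, r \in (0,1)$, we have $x + r(\mathbf{1}_{\{u \le x\}}(1-x) - \mathbf{1}_{\{u > x\}} x) \ge y$ if and only if $x \ge \mathrm{median}\left(\frac{y-r}{1-r}, \frac{y}{1-r}, u\right)$. -/
noncomputable def median (a b c : ℝ) : ℝ := max (min a b) (min (max a b) c)

theorem stmt0 (x y u r : ℝ) (hx : x ∈ Set.Ioo (0:ℝ) 1) (hy : y ∈ Set.Ioo (0:ℝ) 1)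
    (hu : u ∈ Set.Ioo (0:ℝ) 1) (hr : r ∈ Set.Ioo (0:ℝ) 1) :
    x + r * ((if u ≤ x then (1:ℝ) else 0) * (1 - x) - (if u > x then (1:ℝ) else 0) * x) ≥ y ↔
      x ≥ median ((y - r) / (1 - r)) (y / (1 - r)) u := by
  obtain ⟨hr0, hr1⟩ := hr
  obtain ⟨hx0, hx1⟩ := hx
  obtain ⟨hu0, hu1⟩ := hu
  have h1r : (0:ℝ) < 1 - r := by linarith
  have ha : (y - r) / (1 - r) ≤ x ↔ y - r ≤ x * (1 - r) := div_le_iff₀ h1r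
  have hb : y / (1 - r) ≤ x ↔ y ≤ x * (1 - r) := div_le_iff₀ h1r
  have hab : (y - r) / (1 - r) ≤ y / (1 - r) := (div_le_div_iff_of_pos_right h1r).mpr (by linarith)
  rw [ge_iff_le, ge_iff_le, median, min_eq_left hab, max_eq_right hab, max_le_iff, min_le_iff,
    ha, hb]
  by_cases h : u ≤ x
  · rw [if_pos h, if_neg (not_lt.mpr h)]
    constructor
    · intro hle; exact ⟨by nlinarith, Or.inr h⟩
    · rintro ⟨h1, _⟩; nlinarith
  · rw [if_neg h, if_pos (not_le.mp h)]
    push_neg at h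
    constructor
    · intro hle; exact ⟨by nlinarith, Or.inl (by nlinarith)⟩
    · rintro ⟨h1, h2 | h2⟩
      · nlinarith
      · linarith
end

section
/- For all $r \in (0,1/2]$ and $y \in [0,1]$, letting $m_{r,u}(y) = \mathrm{median}\left(\frac{y-r}{1-r}, \frac{y}{1-r}, u\right)$, we have $\left| \int_0^1 (m_{r,u}(y) - y)\, du \right| \le 2r^2$ and $\int_0^1 (m_{r,u}(y) - y)^2\, du \le 4r^2$. -/
lemma cont_left (c : ℝ) : Continuous (fun u : ℝ => max (c - u) 0) :=
  (continuous_const.sub continuous_id).max continuous_const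

lemma cont_right (c : ℝ) : Continuous (fun u : ℝ => max (u - c) 0) :=
  (continuous_id.sub continuous_const).max continuous_const

lemma int_left (c : ℝ) (h0 : 0 ≤ c) (h1 : c ≤ 1) :
    ∫ u in (0:ℝ)..1, max (c - u) 0 = c ^ 2 / 2 := by
  have h2 : ∫ u in (0:ℝ)..c, max (c - u) 0 = c ^ 2 / 2 := by
    rw [intervalIntegral.integral_congr (g := fun u => c - u)]
    · rw [intervalIntegral.integral_sub intervalIntegrable_const
        (intervalIntegral.intervalIntegrable_id)]
      simp [integral_id]
      ring
    · intro x hx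
      rw [Set.uIcc_of_le h0] at hx
      simp only [max_eq_left (by linarith [hx.2] : (0:ℝ) ≤ c - x)]
  have h3 : ∫ u in c..(1:ℝ), max (c - u) 0 = 0 := by
    rw [intervalIntegral.integral_congr (g := fun _ => (0:ℝ))]
    · simp
    · intro x hx
      rw [Set.uIcc_of_le h1] at hx
      simp only [max_eq_right (by linarith [hx.1] : c - x ≤ 0)]
  have := intervalIntegral.integral_add_adjacent_intervals
    ((cont_left c).intervalIntegrable (μ := MeasureTheory.volume) 0 c) ((cont_left c).intervalIntegrable c 1)
  rw [← this, h2, h3]; ring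

lemma int_left_neg (c : ℝ) (h : c ≤ 0) :
    ∫ u in (0:ℝ)..1, max (c - u) 0 = 0 := by
  rw [intervalIntegral.integral_congr (g := fun _ => (0:ℝ))]
  · simp
  · intro x hx
    rw [Set.uIcc_of_le (by norm_num : (0:ℝ) ≤ 1)] at hx
    simp only [max_eq_right (by linarith [hx.1] : c - x ≤ 0)]

lemma int_right (c : ℝ) (h0 : 0 ≤ c) (h1 : c ≤ 1) :
    ∫ u in (0:ℝ)..1, max (u - c) 0 = (1 - c) ^ 2 / 2 := by
  have h2 : ∫ u in (0:ℝ)..c, max (u - c) 0 = 0 := by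
    rw [intervalIntegral.integral_congr (g := fun _ => (0:ℝ))]
    · simp
    · intro x hx
      rw [Set.uIcc_of_le h0] at hx
      simp only [max_eq_right (by linarith [hx.2] : x - c ≤ 0)]
  have h3 : ∫ u in c..(1:ℝ), max (u - c) 0 = (1 - c) ^ 2 / 2 := by
    rw [intervalIntegral.integral_congr (g := fun u => u - c)]
    · rw [intervalIntegral.integral_sub intervalIntegral.intervalIntegrable_id
        intervalIntegrable_const]
      simp [integral_id]
      ring
    · intro x hx
      rw [Set.uIcc_of_le h1] at hx
      simp only [max_eq_left (by linarith [hx.1] : (0:ℝ) ≤ x - c)]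
  have := intervalIntegral.integral_add_adjacent_intervals
    ((cont_right c).intervalIntegrable (μ := MeasureTheory.volume) 0 c) ((cont_right c).intervalIntegrable c 1)
  rw [← this, h2, h3]; ring

lemma int_right_ge (c : ℝ) (h : 1 ≤ c) :
    ∫ u in (0:ℝ)..1, max (u - c) 0 = 0 := by
  rw [intervalIntegral.integral_congr (g := fun _ => (0:ℝ))]
  · simp
  · intro x hx
    rw [Set.uIcc_of_le (by norm_num : (0:ℝ) ≤ 1)] at hx
    simp only [max_eq_right (by linarith [hx.2] : x - c ≤ 0)]

lemma median_eq (a b u : ℝ) (hab : a ≤ b) :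
    median a b u = u + max (a - u) 0 - max (u - b) 0 := by
  unfold median
  rw [min_eq_left hab, max_eq_right hab]
  rcases le_total u a with h | h
  · rw [max_eq_right (by linarith : u - b ≤ 0), max_eq_left (by linarith : 0 ≤ a - u),
      min_eq_right (le_trans h hab), max_eq_left h]
    ring
  · rcases le_total u b with h2 | h2
    · rw [max_eq_right (by linarith : u - b ≤ 0), max_eq_right (by linarith : a - u ≤ 0),
        min_eq_right h2, max_eq_right h]
      ring
    · rw [max_eq_left (by linarith : 0 ≤ u - b), max_eq_right (by linarith : a - u ≤ 0),
        min_eq_left h2, max_eq_right hab]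
      ring

lemma median_mem (a b u : ℝ) (hab : a ≤ b) : a ≤ median a b u ∧ median a b u ≤ b := by
  unfold median
  rw [min_eq_left hab, max_eq_right hab]
  exact ⟨le_max_left _ _, max_le hab (min_le_left _ _)⟩

noncomputable def mru (r u y : ℝ) : ℝ := median ((y - r) / (1 - r)) (y / (1 - r)) u

set_option maxHeartbeats 1000000 in
theorem stmt4 (r y : ℝ) (hr : r ∈ Set.Ioc (0:ℝ) (1/2)) (hy : y ∈ Set.Icc (0:ℝ) 1) :
    |∫ u in (0:ℝ)..1, (mru r u y - y)| ≤ 2 * r ^ 2 ∧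
      (∫ u in (0:ℝ)..1, (mru r u y - y) ^ 2) ≤ 4 * r ^ 2 := by
  obtain ⟨hr0, hr1⟩ := hr
  obtain ⟨hy0, hy1⟩ := hy
  have hd : (0:ℝ) < 1 - r := by linarith
  set a := (y - r) / (1 - r) with ha_def
  set b := y / (1 - r) with hb_def
  have hab : a ≤ b := by
    rw [ha_def, hb_def, div_le_div_iff_of_pos_right hd]
    linarith
  have hay : a ≤ y := by rw [ha_def, div_le_iff₀ hd]; nlinarith
  have hyb : y ≤ b := by rw [hb_def, le_div_iff₀ hd]; nlinarith
  have hba : b - a = r / (1 - r) := by rw [ha_def, hb_def]; field_simp; ring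
  have hmru : ∀ u, mru r u y = median a b u := fun u => rfl
  constructor
  · -- first part
    have key : (fun u => mru r u y - y) =
        fun u => (u - y) + (max (a - u) 0 - max (u - b) 0) := by
      funext u
      rw [hmru, median_eq a b u hab]
      ring
    rw [key]
    have c1 : Continuous (fun u : ℝ => u - y) := by fun_prop
    have hsplit : (∫ u in (0:ℝ)..1, ((u - y) + (max (a - u) 0 - max (u - b) 0))) =
        (∫ u in (0:ℝ)..1, (u - y)) +
          ((∫ u in (0:ℝ)..1, max (a - u) 0) - ∫ u in (0:ℝ)..1, max (u - b) 0) := by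
      rw [intervalIntegral.integral_add (g := fun u => max (a - u) 0 - max (u - b) 0) (c1.intervalIntegrable 0 1)
        (((cont_left a).sub (cont_right b)).intervalIntegrable 0 1),
        intervalIntegral.integral_sub ((cont_left a).intervalIntegrable 0 1)
        ((cont_right b).intervalIntegrable 0 1)]
    rw [hsplit]
    have h1 : ∫ u in (0:ℝ)..1, (u - y) = 1 / 2 - y := by
      rw [intervalIntegral.integral_sub intervalIntegral.intervalIntegrable_id
        intervalIntegrable_const]
      simp [integral_id]
    rw [h1]
    have ha1 : a ≤ 1 := le_trans hay hy1
    have hb0 : 0 ≤ b := le_trans hy0 hyb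
    rcases le_or_gt 0 a with hA | hA <;> rcases le_or_gt b 1 with hB | hB
    · -- r ≤ y ≤ 1 - r
      rw [int_left a hA ha1, int_right b hb0 hB]
      have hya : r ≤ y := by
        rw [ha_def, le_div_iff₀ hd] at hA; nlinarith
      have hyB : y ≤ 1 - r := by
        rw [hb_def, div_le_one hd] at hB; linarith
      have hI : 1 / 2 - y + (a ^ 2 / 2 - (1 - b) ^ 2 / 2) =
          (1 - 2 * y) * r ^ 2 / (2 * (1 - r) ^ 2) := by
        rw [ha_def, hb_def]; field_simp; ring
      rw [hI, abs_le]
      constructor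
      · rw [neg_le, ← neg_div, div_le_iff₀ (by positivity)]
        nlinarith [sq_nonneg r, sq_nonneg (1 - 2 * r)]
      · rw [div_le_iff₀ (by positivity)]
        nlinarith [sq_nonneg r, sq_nonneg (1 - 2 * r)]
    · -- y > 1 - r (and a ≥ 0)
      rw [int_left a hA ha1, int_right_ge b (le_of_lt hB)]
      have hyB : 1 - r < y := by
        rw [hb_def, lt_div_iff₀ hd] at hB; nlinarith
      have hI : 1 / 2 - y + (a ^ 2 / 2 - 0) =
          ((1 - y) ^ 2 - 2 * (1 - y) * r * (1 - r)) / (2 * (1 - r) ^ 2) := by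
        rw [ha_def]; field_simp; ring
      rw [hI, abs_le]
      have hz0 : 0 ≤ 1 - y := by linarith
      have hzr : 1 - y < r := by linarith
      constructor
      · rw [neg_le, ← neg_div, div_le_iff₀ (by positivity)]
        nlinarith [sq_nonneg (1 - y), mul_nonneg hz0 hr0.le, mul_pos hr0 hd,
          mul_le_mul_of_nonneg_right hzr.le (mul_nonneg hr0.le hd.le), sq_nonneg (1 - 2 * r)]
      · rw [div_le_iff₀ (by positivity)]
        nlinarith [mul_nonneg (mul_nonneg hz0 hr0.le) hd.le,
          mul_self_le_mul_self hz0 hzr.le, sq_nonneg (1 - 2 * r), sq_nonneg r]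
    · -- y < r (and b ≤ 1)
      rw [int_left_neg a (le_of_lt hA), int_right b hb0 hB]
      have hya : y < r := by
        rw [ha_def, div_lt_iff₀ hd] at hA; nlinarith
      have hI : 1 / 2 - y + (0 - (1 - b) ^ 2 / 2) =
          (2 * r * (1 - r) * y - y ^ 2) / (2 * (1 - r) ^ 2) := by
        rw [hb_def]; field_simp; ring
      rw [hI, abs_le]
      constructor
      · rw [neg_le, ← neg_div, div_le_iff₀ (by positivity)]
        nlinarith [mul_nonneg (mul_nonneg hr0.le hd.le) hy0,
          mul_self_le_mul_self hy0 hya.le, sq_nonneg (1 - 2 * r), sq_nonneg r]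
      · rw [div_le_iff₀ (by positivity)]
        nlinarith [sq_nonneg y, mul_nonneg hy0 hr0.le, mul_pos hr0 hd,
          mul_le_mul_of_nonneg_right hya.le (mul_nonneg hr0.le hd.le), sq_nonneg (1 - 2 * r)]
    · -- impossible: y < r and y > 1 - r with r ≤ 1/2
      exfalso
      have hya : y < r := by
        rw [ha_def, div_lt_iff₀ hd] at hA; nlinarith
      have hyB : 1 - r < y := by
        rw [hb_def, lt_div_iff₀ hd] at hB; nlinarith
      linarith
  · -- second part
    have hbound : ∀ u ∈ Set.Icc (0:ℝ) 1, (mru r u y - y) ^ 2 ≤ 4 * r ^ 2 := by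
      intro u _
      rw [hmru]
      obtain ⟨h1, h2⟩ := median_mem a b u hab
      have habs : |median a b u - y| ≤ b - a := by
        rw [abs_le]; constructor <;> linarith
      have hba2 : b - a ≤ 2 * r := by
        rw [hba, div_le_iff₀ hd]; nlinarith
      calc (median a b u - y) ^ 2 = |median a b u - y| ^ 2 := (sq_abs _).symm
        _ ≤ (2 * r) ^ 2 := by
            apply pow_le_pow_left₀ (abs_nonneg _) (le_trans habs hba2)
        _ = 4 * r ^ 2 := by ring
    have hcont : Continuous (fun u => (mru r u y - y) ^ 2) := by
      have : Continuous (fun u => mru r u y) := by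
        simp only [hmru]
        unfold median
        fun_prop
      fun_prop
    calc (∫ u in (0:ℝ)..1, (mru r u y - y) ^ 2)
        ≤ ∫ _u in (0:ℝ)..1, 4 * r ^ 2 := by
          apply intervalIntegral.integral_mono_on (by norm_num)
            (hcont.intervalIntegrable 0 1) intervalIntegrable_const
          intro u hu; exact hbound u hu
      _ = 4 * r ^ 2 := by simp
end

section
/- For $r \in (0,1)$ with $r \le y \le 1-r$ and $y \in [0,1]$, $\int_0^1 (m_{r,u}(y) - y)\, du = \frac{r^2}{(1-r)^2}\left(\frac{1}{2} - y\right)$. -/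
theorem stmt5 (r y : ℝ) (hr : r ∈ Set.Ioo (0:ℝ) 1) (hy : y ∈ Set.Icc (0:ℝ) 1)
    (h1 : r ≤ y) (h2 : y ≤ 1 - r) :
    (∫ u in (0:ℝ)..1, (mru r u y - y)) = r ^ 2 / (1 - r) ^ 2 * (1 / 2 - y) := by
  obtain ⟨hr0, hr1⟩ := hr
  have h1r : (0:ℝ) < 1 - r := by linarith
  have h1r' : (1:ℝ) - r ≠ 0 := ne_of_gt h1r
  set a := (y - r) / (1 - r) with ha_def
  set b := y / (1 - r) with hb_def
  have hab : a ≤ b := by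
    apply (div_le_div_iff_of_pos_right h1r).mpr; linarith
  have ha0 : 0 ≤ a := div_nonneg (by linarith) (le_of_lt h1r)
  have hb1 : b ≤ 1 := (div_le_one h1r).mpr h2
  have key : ∀ u, mru r u y = max a (min b u) := by
    intro u
    simp only [mru, median, ← ha_def, ← hb_def, min_eq_left hab, max_eq_right hab]
  have hcont : Continuous fun u => mru r u y - y := by
    simp only [key]
    exact ((continuous_const.max (continuous_const.min continuous_id)).sub continuous_const)
  have hint : ∀ c d : ℝ, IntervalIntegrable (fun u => mru r u y - y) MeasureTheory.volume c d :=
    fun c d => hcont.intervalIntegrable c d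
  have I1 : (∫ u in (0:ℝ)..a, (mru r u y - y)) = a * (a - y) := by
    rw [intervalIntegral.integral_congr (g := fun _ => a - y)]
    · simp [smul_eq_mul]; ring
    · intro u hu
      rw [Set.uIcc_of_le ha0] at hu
      show mru r u y - y = _
      rw [key u,min_eq_right (hu.2.trans hab), max_eq_left hu.2]
  have I2 : (∫ u in a..b, (mru r u y - y)) = (b^2 - a^2)/2 - (b - a) * y := by
    rw [intervalIntegral.integral_congr (g := fun u => u - y)]
    · rw [intervalIntegral.integral_sub (((by continuity : Continuous fun x:ℝ => x).intervalIntegrable a b))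
        (intervalIntegrable_const)]
      simp [integral_id, smul_eq_mul]
      try ring
    · intro u hu
      rw [Set.uIcc_of_le hab] at hu
      show mru r u y - y = _
      rw [key u,min_eq_right hu.2, max_eq_right hu.1]
  have I3 : (∫ u in b..(1:ℝ), (mru r u y - y)) = (1 - b) * (b - y) := by
    rw [intervalIntegral.integral_congr (g := fun _ => b - y)]
    · simp [smul_eq_mul]; ring
    · intro u hu
      rw [Set.uIcc_of_le hb1] at hu
      show mru r u y - y = _
      rw [key u,min_eq_left hu.1, max_eq_right hab]
  have split1 : (∫ u in (0:ℝ)..b, (mru r u y - y))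
      = (∫ u in (0:ℝ)..a, (mru r u y - y)) + (∫ u in a..b, (mru r u y - y)) :=
    (intervalIntegral.integral_add_adjacent_intervals (hint 0 a) (hint a b)).symm
  have split2 : (∫ u in (0:ℝ)..1, (mru r u y - y))
      = (∫ u in (0:ℝ)..b, (mru r u y - y)) + (∫ u in b..1, (mru r u y - y)) :=
    (intervalIntegral.integral_add_adjacent_intervals (hint 0 b) (hint b 1)).symm
  rw [split2, split1, I1, I2, I3, ha_def, hb_def]
  field_simp
  ring
end

section
/- There exists a constant $K > 0$ such that for all $r \in (0,1/2)$ and all $x, y \in (0,1)$: $\int_0^1 |m_{r,u}(y) - y|\, du \le K r$ and $\int_0^1 |m_{r,u}(y) - y - (m_{r,u}(x) - x)|\, du \le K |x - y|\, r$. -/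
lemma mru_eq (r u y : ℝ) (hr0 : 0 < r) (hr1 : r < 1) :
    mru r u y = max ((y - r) / (1 - r)) (min (y / (1 - r)) u) := by
  have h1 : (0:ℝ) < 1 - r := by linarith
  have hab : (y - r) / (1 - r) ≤ y / (1 - r) :=
    (div_le_div_iff_of_pos_right h1).mpr (by linarith)
  unfold mru median
  rw [min_eq_left hab, max_eq_right hab]

lemma mru_cont (r y : ℝ) : Continuous fun u => mru r u y := by
  unfold mru median
  exact continuous_const.max (continuous_const.min continuous_id)

/-- Key second-part lemma assuming `x ≤ y`. -/
lemma key2 (r x y : ℝ) (hr : r ∈ Set.Ioo (0:ℝ) (1/2)) (hx : x ∈ Set.Ioo (0:ℝ) 1)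
    (hy : y ∈ Set.Ioo (0:ℝ) 1) (hxy : x ≤ y) :
    (∫ u in (0:ℝ)..1, |mru r u y - y - (mru r u x - x)|) ≤ 10 * (y - x) * r := by
  obtain ⟨hr0, hr2⟩ := hr
  have hr1 : r < 1 := by linarith
  have h1 : (0:ℝ) < 1 - r := by linarith
  have h12 : (1:ℝ)/2 < 1 - r := by linarith
  set ax : ℝ := (x - r) / (1 - r) with hax
  set bx : ℝ := x / (1 - r) with hbx
  set s : ℝ := (y - x) / (1 - r) with hs_def
  set F : ℝ → ℝ := fun u => max ax (min bx u) with hF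
  have hs : 0 ≤ s := div_nonneg (by linarith) h1.le
  set t : ℝ := s - (y - x) with ht_def
  have ht_eq : t = (y - x) * r / (1 - r) := by
    rw [ht_def, hs_def]; field_simp; ring
  have ht : 0 ≤ t := by
    rw [ht_eq]; exact div_nonneg (mul_nonneg (by linarith) hr0.le) h1.le
  have habx : ax ≤ bx := (div_le_div_iff_of_pos_right h1).mpr (by linarith)
  have hbax : bx - ax = r / (1 - r) := by
    rw [hax, hbx, div_sub_div_same]; ring_nf
  have hFcont : Continuous F := continuous_const.max (continuous_const.min continuous_id)
  have hmx : ∀ u, mru r u x = F u := fun u => mru_eq r u x hr0 hr1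
  have hmy : ∀ u : ℝ, mru r u y = F (u - s) + s := by
    intro u
    rw [mru_eq r u y hr0 hr1, hF]
    simp only
    rw [← max_add_add_right, ← min_add_add_right, sub_add_cancel]
    congr 1
    · rw [hax, hs_def, ← add_div]; ring_nf
    · rw [hbx, hs_def, ← add_div]; ring_nf
  have hmono : ∀ u : ℝ, F (u - s) ≤ F u := fun u =>
    max_le_max le_rfl (min_le_min le_rfl (sub_le_self u hs))
  have hlip : ∀ u : ℝ, F u ≤ F (u - s) + s := by
    intro u
    have : min bx u ≤ min bx (u - s) + s := by
      rw [← min_add_add_right, sub_add_cancel]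
      exact min_le_min (by linarith) le_rfl
    calc F u = max ax (min bx u) := rfl
    _ ≤ max (ax + s) (min bx (u - s) + s) := max_le_max (by linarith) this
    _ = F (u - s) + s := by rw [max_add_add_right]
  -- pointwise bound
  have hpt : ∀ u : ℝ, |mru r u y - y - (mru r u x - x)| ≤ F u - F (u - s) + t := by
    intro u
    rw [hmy u, hmx u]
    have h1' := hmono u
    have h2' := hlip u
    have : F (u - s) + s - y - (F u - x) = (F (u - s) - F u) + t := by
      rw [ht_def]; ring
    rw [this]
    rw [abs_le]
    constructor <;> linarith
  -- integrability
  have hint1 : IntervalIntegrable (fun u => |mru r u y - y - (mru r u x - x)|) MeasureTheory.volume 0 1 := by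
    apply Continuous.intervalIntegrable
    exact (((mru_cont r y).sub continuous_const).sub ((mru_cont r x).sub continuous_const)).abs
  have hint2 : ∀ a b : ℝ, IntervalIntegrable F MeasureTheory.volume a b :=
    fun a b => hFcont.intervalIntegrable a b
  have hint3 : ∀ a b : ℝ, IntervalIntegrable (fun u => F (u - s)) MeasureTheory.volume a b :=
    fun a b => (hFcont.comp (continuous_id.sub continuous_const)).intervalIntegrable a b
  have step1 : (∫ u in (0:ℝ)..1, |mru r u y - y - (mru r u x - x)|)
      ≤ ∫ u in (0:ℝ)..1, (F u - F (u - s) + t) := by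
    apply intervalIntegral.integral_mono_on (by norm_num) hint1
    · exact (((hint2 0 1).sub (hint3 0 1)).add (intervalIntegrable_const))
    · exact fun u _ => hpt u
  have step2 : (∫ u in (0:ℝ)..1, (F u - F (u - s) + t))
      = (∫ u in (0:ℝ)..1, F u) - (∫ u in (0:ℝ)..1, F (u - s)) + t := by
    rw [intervalIntegral.integral_add ((hint2 0 1).sub (hint3 0 1)) intervalIntegrable_const,
      intervalIntegral.integral_sub (hint2 0 1) (hint3 0 1)]
    simp
  have hshift : (∫ u in (0:ℝ)..1, F (u - s)) = ∫ u in (0:ℝ)-s..(1:ℝ)-s, F u :=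
    intervalIntegral.integral_comp_sub_right F s
  have e1 : (∫ u in (0:ℝ)-s..(1:ℝ)-s, F u) + (∫ u in (1:ℝ)-s..(1:ℝ), F u)
      = ∫ u in (0:ℝ)-s..(1:ℝ), F u :=
    intervalIntegral.integral_add_adjacent_intervals (hint2 _ _) (hint2 _ _)
  have e2 : (∫ u in (0:ℝ)-s..(0:ℝ), F u) + (∫ u in (0:ℝ)..(1:ℝ), F u)
      = ∫ u in (0:ℝ)-s..(1:ℝ), F u :=
    intervalIntegral.integral_add_adjacent_intervals (hint2 _ _) (hint2 _ _)
  have hub : (∫ u in (1:ℝ)-s..(1:ℝ), F u) ≤ s * bx := by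
    have : (∫ u in (1:ℝ)-s..(1:ℝ), F u) ≤ ∫ u in (1:ℝ)-s..(1:ℝ), bx := by
      apply intervalIntegral.integral_mono_on (by linarith) (hint2 _ _) intervalIntegrable_const
      exact fun u _ => max_le habx (min_le_left _ _)
    simpa using this.trans_eq (by simp [smul_eq_mul])
  have hlb : s * ax ≤ (∫ u in (0:ℝ)-s..(0:ℝ), F u) := by
    have : (∫ u in (0:ℝ)-s..(0:ℝ), (ax:ℝ)) ≤ ∫ u in (0:ℝ)-s..(0:ℝ), F u := by
      apply intervalIntegral.integral_mono_on (by linarith) intervalIntegrable_const (hint2 _ _)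
      exact fun u _ => le_max_left _ _
    refine le_trans (le_of_eq ?_) this
    simp [smul_eq_mul]
  have hmain : (∫ u in (0:ℝ)..1, F u) - (∫ u in (0:ℝ)..1, F (u - s)) ≤ s * (bx - ax) := by
    rw [hshift]
    nlinarith [hub, hlb, e1, e2]
  have hfinal : s * (bx - ax) + t ≤ 10 * (y - x) * r := by
    rw [hbax, ht_eq, hs_def]
    rw [div_mul_div_comm]
    rw [div_add_div _ _ (by positivity : ((1:ℝ)-r)*(1-r) ≠ 0) (ne_of_gt h1)]
    rw [div_le_iff₀ (by positivity)]
    have hA : 0 ≤ (y - x) * r := mul_nonneg (by linarith) hr0.le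
    have hd : 0 ≤ 10 * (1-r)^3 - (1-r)^2 - (1-r) := by
      nlinarith [mul_pos (show (0:ℝ) < 2*(1-r)-1 by linarith)
        (show (0:ℝ) < 5*(1-r)+2 by linarith), h1]
    nlinarith [mul_nonneg hA hd]
  calc (∫ u in (0:ℝ)..1, |mru r u y - y - (mru r u x - x)|)
      ≤ (∫ u in (0:ℝ)..1, F u) - (∫ u in (0:ℝ)..1, F (u - s)) + t := by
        rw [← step2]; exact step1
    _ ≤ s * (bx - ax) + t := by linarith [hmain]
    _ ≤ 10 * (y - x) * r := hfinal

theorem stmt6 :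
    ∃ K : ℝ, 0 < K ∧
      ∀ r ∈ Set.Ioo (0:ℝ) (1/2), ∀ x ∈ Set.Ioo (0:ℝ) 1, ∀ y ∈ Set.Ioo (0:ℝ) 1,
        (∫ u in (0:ℝ)..1, |mru r u y - y|) ≤ K * r ∧
        (∫ u in (0:ℝ)..1, |mru r u y - y - (mru r u x - x)|) ≤ K * |x - y| * r := by
  refine ⟨10, by norm_num, ?_⟩
  rintro r ⟨hr0, hr2⟩ x hx y hy
  have hr1 : r < 1 := by linarith
  have h1 : (0:ℝ) < 1 - r := by linarith
  constructor
  · -- first bound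
    have hpt : ∀ u : ℝ, |mru r u y - y| ≤ 2 * r := by
      intro u
      rw [mru_eq r u y hr0 hr1]
      set a : ℝ := (y - r) / (1 - r)
      set b : ℝ := y / (1 - r)
      have hab : a ≤ b := (div_le_div_iff_of_pos_right h1).mpr (by linarith)
      have hay : a ≤ y := by
        rw [div_le_iff₀ h1]; nlinarith [hy.2, hr0]
      have hyb : y ≤ b := by
        rw [le_div_iff₀ h1]; nlinarith [hy.1.le, hr0]
      have hba : b - a ≤ 2 * r := by
        have : b - a = r / (1 - r) := by rw [div_sub_div_same]; ring_nf
        rw [this, div_le_iff₀ h1]; nlinarith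
      have hm1 : a ≤ max a (min b u) := le_max_left _ _
      have hm2 : max a (min b u) ≤ b := max_le hab (min_le_left _ _)
      rw [abs_le]; constructor <;> linarith
    have hcont : Continuous fun u => |mru r u y - y| :=
      ((mru_cont r y).sub continuous_const).abs
    calc (∫ u in (0:ℝ)..1, |mru r u y - y|)
        ≤ ∫ _u in (0:ℝ)..1, 2 * r := by
          apply intervalIntegral.integral_mono_on (by norm_num)
            (hcont.intervalIntegrable 0 1) intervalIntegrable_const
          exact fun u _ => hpt u
      _ = 2 * r := by simp
      _ ≤ 10 * r := by linarith
  · -- second bound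
    rcases le_total x y with hxy | hxy
    · have := key2 r x y ⟨hr0, hr2⟩ hx hy hxy
      have habs : |x - y| = y - x := by rw [abs_sub_comm, abs_of_nonneg (by linarith)]
      rw [habs]; exact this
    · have heq : ∀ u : ℝ, |mru r u y - y - (mru r u x - x)|
          = |mru r u x - x - (mru r u y - y)| := fun u => abs_sub_comm _ _
      have : (∫ u in (0:ℝ)..1, |mru r u y - y - (mru r u x - x)|)
          = ∫ u in (0:ℝ)..1, |mru r u x - x - (mru r u y - y)| := by
        simp_rw [heq]
      rw [this]
      have := key2 r y x ⟨hr0, hr2⟩ hy hx hxy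
      have habs : |x - y| = x - y := abs_of_nonneg (by linarith)
      rw [habs]; exact this
end

section
/- For every $\alpha \ge 1$ and all $x, y \in [0,1]$, $\int_0^1 |\mathrm{median}(y-1, y, (u-y)\alpha) - \mathrm{median}(y-1, y, (u-x)\alpha)|\, du \le 3|x-y|$. -/
theorem stmt7 (α x y : ℝ) (hα : 1 ≤ α) (hx : x ∈ Set.Icc (0:ℝ) 1) (hy : y ∈ Set.Icc (0:ℝ) 1) :
    (∫ u in (0:ℝ)..1,
      |median (y - 1) y ((u - y) * α) - median (y - 1) y ((u - x) * α)|) ≤ 3 * |x - y| := by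
  set d : ℝ := y - x with hdd
  set f : ℝ → ℝ := fun u => max (y - 1) (min y ((u - y) * α)) with hf
  have hα0 : (0:ℝ) ≤ α := by linarith
  have hab : y - 1 ≤ y := by linarith
  have hmed : ∀ c : ℝ, median (y - 1) y c = max (y - 1) (min y c) := by
    intro c
    simp [median, min_eq_left hab, max_eq_right hab]
  have hfu : ∀ u : ℝ, median (y - 1) y ((u - y) * α) = f u := fun u => hmed _
  have hfg : ∀ u : ℝ, median (y - 1) y ((u - x) * α) = f (u + d) := by
    intro u
    have h1 : u - x = u + d - y := by rw [hdd]; ring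
    rw [h1, hmed]
  have hmono : Monotone f := by
    intro a b h
    exact max_le_max le_rfl (min_le_min le_rfl (by nlinarith))
  have hlb : ∀ u : ℝ, y - 1 ≤ f u := fun u => le_max_left _ _
  have hub : ∀ u : ℝ, f u ≤ y := fun u => max_le hab (min_le_left _ _)
  have hcont : Continuous f := by
    apply Continuous.max continuous_const
    exact Continuous.min continuous_const (by continuity)
  have hint : ∀ a b : ℝ, IntervalIntegrable f MeasureTheory.volume a b :=
    fun a b => hcont.intervalIntegrable a b
  have hcont2 : Continuous (fun u : ℝ => f (u + d)) :=
    hcont.comp (continuous_id.add continuous_const)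
  have hint2 : IntervalIntegrable (fun u : ℝ => f (u + d)) MeasureTheory.volume 0 1 :=
    hcont2.intervalIntegrable 0 1
  have hshift : (∫ u in (0:ℝ)..1, f (u + d)) = ∫ u in d..(1+d), f u := by
    have := intervalIntegral.integral_comp_add_right (a := (0:ℝ)) (b := 1) f d
    simp only [zero_add] at this; exact this
  have hsplit1 : (∫ u in (0:ℝ)..1, f u) = (∫ u in (0:ℝ)..d, f u) + ∫ u in d..1, f u :=
    (intervalIntegral.integral_add_adjacent_intervals (hint 0 d) (hint d 1)).symm
  have hsplit2 : (∫ u in d..(1+d), f u) = (∫ u in d..1, f u) + ∫ u in (1:ℝ)..(1+d), f u :=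
    (intervalIntegral.integral_add_adjacent_intervals (hint d 1) (hint 1 (1+d))).symm
  rcases le_total 0 d with hd0 | hd0
  · -- case 0 ≤ d
    have habs : |x - y| = d := by rw [abs_sub_comm, hdd.symm, abs_of_nonneg hd0]
    have heq : (∫ u in (0:ℝ)..1,
        |median (y - 1) y ((u - y) * α) - median (y - 1) y ((u - x) * α)|)
        = (∫ u in d..(1+d), f u) - ∫ u in (0:ℝ)..1, f u := by
      have hpt : ∀ u : ℝ, |median (y - 1) y ((u - y) * α) - median (y - 1) y ((u - x) * α)|
          = f (u + d) - f u := by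
        intro u
        rw [hfu, hfg, abs_sub_comm, abs_of_nonneg (sub_nonneg.mpr (hmono (by linarith)))]
      simp only [hpt]
      rw [intervalIntegral.integral_sub hint2 (hint 0 1), hshift]
    rw [heq, hsplit1, hsplit2, habs]
    have h1 : (∫ u in (1:ℝ)..(1+d), f u) ≤ ((1+d) - 1) * y := by
      have := intervalIntegral.integral_mono_on (by linarith : (1:ℝ) ≤ 1+d)
        (hint 1 (1+d)) (intervalIntegrable_const (c := y)) (fun u _ => hub u)
      simpa [smul_eq_mul] using this
    have h2 := intervalIntegral.integral_mono_on hd0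
        (intervalIntegrable_const (c := y - 1)) (hint 0 d) (fun u _ => hlb u)
    rw [intervalIntegral.integral_const, smul_eq_mul] at h2
    nlinarith [h1, h2]
  · -- case d ≤ 0
    have habs : |x - y| = -d := by rw [abs_sub_comm, hdd.symm, abs_of_nonpos hd0]
    have heq : (∫ u in (0:ℝ)..1,
        |median (y - 1) y ((u - y) * α) - median (y - 1) y ((u - x) * α)|)
        = (∫ u in (0:ℝ)..1, f u) - ∫ u in d..(1+d), f u := by
      have hpt : ∀ u : ℝ, |median (y - 1) y ((u - y) * α) - median (y - 1) y ((u - x) * α)|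
          = f u - f (u + d) := by
        intro u
        rw [hfu, hfg, abs_of_nonneg (sub_nonneg.mpr (hmono (by linarith)))]
      simp only [hpt]
      rw [intervalIntegral.integral_sub (hint 0 1) hint2, hshift]
    rw [heq, hsplit1, hsplit2, habs]
    have h1 : (∫ u in (1+d)..(1:ℝ), f u) ≤ (1 - (1+d)) * y := by
      have := intervalIntegral.integral_mono_on (by linarith : (1+d:ℝ) ≤ 1)
        (hint (1+d) 1) (intervalIntegrable_const (c := y)) (fun u _ => hub u)
      simpa [smul_eq_mul] using this
    have h2 := intervalIntegral.integral_mono_on hd0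
        (intervalIntegrable_const (c := y - 1)) (hint d 0) (fun u _ => hlb u)
    rw [intervalIntegral.integral_const, smul_eq_mul] at h2
    have e1 : (∫ u in (1:ℝ)..(1+d), f u) = -∫ u in (1+d)..(1:ℝ), f u :=
      intervalIntegral.integral_symm _ _
    have e2 : (∫ u in (0:ℝ)..d, f u) = -∫ u in d..(0:ℝ), f u :=
      intervalIntegral.integral_symm _ _
    rw [e1, e2]
    nlinarith [h1, h2]
end

section
/- For every $\alpha \ge 1$ and all $x, y \in [0,1]$, $\int_0^1 |\mathrm{median}(y-1, y, (u-x)\alpha) - \mathrm{median}(x-1, x, (u-x)\alpha)|\, du \le 3|x-y|$. -/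
theorem stmt8 (α x y : ℝ) (hα : 1 ≤ α) (hx : x ∈ Set.Icc (0:ℝ) 1) (hy : y ∈ Set.Icc (0:ℝ) 1) :
    (∫ u in (0:ℝ)..1,
      |median (y - 1) y ((u - x) * α) - median (x - 1) x ((u - x) * α)|) ≤ 3 * |x - y| := by
  have key : ∀ u : ℝ, |median (y-1) y ((u-x)*α) - median (x-1) x ((u-x)*α)| ≤ |x - y| := by
    intro u
    set t := (u - x) * α with ht
    have h1 : median (y-1) y t = max (y-1) (min y t) := by
      unfold median
      rw [min_eq_left (by linarith), max_eq_right (by linarith : y - 1 ≤ y)]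
    have h2 : median (x-1) x t = max (x-1) (min x t) := by
      unfold median
      rw [min_eq_left (by linarith), max_eq_right (by linarith : x - 1 ≤ x)]
    rw [h1, h2]
    have hmin : |min y t - min x t| ≤ |y - x| := by
      have h := abs_min_sub_min_le_max y t x t
      simpa using h
    have hmax := abs_max_sub_max_le_max (y-1) (min y t) (x-1) (min x t)
    have hyx : |x - y| = |y - x| := abs_sub_comm x y
    rw [hyx]
    refine hmax.trans ?_
    have : y - 1 - (x - 1) = y - x := by ring
    rw [this]
    exact max_le le_rfl hmin
  have hcont : Continuous fun u : ℝ =>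
      |median (y-1) y ((u-x)*α) - median (x-1) x ((u-x)*α)| := by
    unfold median
    fun_prop
  calc (∫ u in (0:ℝ)..1,
      |median (y - 1) y ((u - x) * α) - median (x - 1) x ((u - x) * α)|)
      ≤ ∫ _u in (0:ℝ)..1, |x - y| := by
        apply intervalIntegral.integral_mono_on (by norm_num)
          (hcont.intervalIntegrable _ _) intervalIntegrable_const
        intro u _
        exact key u
    _ = |x - y| := by simp
    _ ≤ 3 * |x - y| := by nlinarith [abs_nonneg (x - y)]
end

section
/- Let $y \in (0, 1/2]$ and $r \in (0, 1/2]$, and let $m_{r,u}(y) = \mathrm{median}\left(\frac{y-r}{1-r}, \frac{y}{1-r}, u\right)$. Then $\int_0^1 \frac{1}{\sqrt{m_{r,u}(y)}}\, du = \frac{y + 1 - r - \sqrt{y(y-r)}\,\mathbf{1}_{\{r \le y\}}}{\sqrt{y(1-r)}}$. -/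
private lemma one_div_sqrt_eq_rpow (u : ℝ) : 1 / Real.sqrt u = u ^ (-(1/2) : ℝ) := by
  rcases lt_trichotomy u 0 with h | h | h
  · rw [Real.sqrt_eq_zero_of_nonpos h.le, Real.rpow_def_of_neg h]
    have hc : Real.cos (-(1/2) * Real.pi) = 0 := by
      rw [show (-(1/2):ℝ) * Real.pi = -(Real.pi/2) by ring, Real.cos_neg, Real.cos_pi_div_two]
    have hc2 : Real.cos (2⁻¹ * Real.pi) = 0 := by
      rw [show (2⁻¹:ℝ) * Real.pi = Real.pi/2 by ring, Real.cos_pi_div_two]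
    simp [hc, hc2]
  · subst h; rw [Real.sqrt_zero, Real.zero_rpow (by norm_num)]; simp
  · rw [Real.rpow_neg h.le, ← Real.sqrt_eq_rpow, one_div]

theorem stmt9 (r y : ℝ) (hr : r ∈ Set.Ioc (0:ℝ) (1/2)) (hy : y ∈ Set.Ioc (0:ℝ) (1/2)) :
    (∫ u in (0:ℝ)..1, 1 / Real.sqrt (mru r u y)) =
      (y + 1 - r - (if r ≤ y then Real.sqrt (y * (y - r)) else 0)) /
        Real.sqrt (y * (1 - r)) := by
  obtain ⟨hr0, hr2⟩ := hr
  obtain ⟨hy0, hy2⟩ := hy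
  have h1r : (0:ℝ) < 1 - r := by linarith
  set a := (y - r) / (1 - r) with ha
  set b := y / (1 - r) with hbdef
  have hab : a ≤ b := by
    rw [ha, hbdef]
    exact div_le_div_of_nonneg_right (by linarith) h1r.le
  have hb0 : 0 < b := div_pos hy0 h1r
  have hb1 : b ≤ 1 := by rw [hbdef, div_le_one h1r]; linarith
  have hmru : ∀ u, mru r u y = max a (min b u) := by
    intro u
    unfold mru median
    rw [← ha, ← hbdef, min_eq_left hab, max_eq_right hab]
  have hsb : 0 < Real.sqrt b := Real.sqrt_pos.mpr hb0
  have hsyr : 0 < Real.sqrt (y * (1 - r)) := Real.sqrt_pos.mpr (mul_pos hy0 h1r)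
  have eb1 : b * (1 - r) = y := by rw [hbdef]; field_simp
  have key : Real.sqrt (y * (1 - r)) = (1 - r) * Real.sqrt b := by
    rw [show y * (1 - r) = (1 - r)^2 * b by rw [hbdef]; field_simp,
      Real.sqrt_mul (sq_nonneg _), Real.sqrt_sq h1r.le]
  have hbb : Real.sqrt b * Real.sqrt b = b := Real.mul_self_sqrt hb0.le
  have e1 : Real.sqrt b * Real.sqrt (y * (1 - r)) = y := by
    rw [key]; linear_combination (1 - r) * hbb + eb1
  have e3 : (Real.sqrt b)⁻¹ * Real.sqrt (y * (1 - r)) = 1 - r := by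
    rw [key]; field_simp
  have hcongr : ∀ (c d : ℝ) (g : ℝ → ℝ),
      Set.EqOn (fun u => 1 / Real.sqrt (mru r u y)) g (Set.uIcc c d) →
      IntervalIntegrable g MeasureTheory.volume c d →
      IntervalIntegrable (fun u => 1 / Real.sqrt (mru r u y)) MeasureTheory.volume c d :=
    fun c d g he hg => hg.congr
      (fun x hx => (he (Set.uIoc_subset_uIcc hx)).symm)
  have ec : Set.EqOn (fun u => 1 / Real.sqrt (mru r u y)) (fun _ => 1 / Real.sqrt b)
      (Set.uIcc b 1) := by
    intro u hu
    rw [Set.uIcc_of_le hb1] at hu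
    simp only
    rw [hmru, min_eq_left hu.1, max_eq_right hab]
  have J3 : IntervalIntegrable (fun u => 1 / Real.sqrt (mru r u y)) MeasureTheory.volume b 1 :=
    hcongr _ _ _ ec intervalIntegrable_const
  have I3 : (∫ u in b..1, 1 / Real.sqrt (mru r u y)) = (1 - b) * (Real.sqrt b)⁻¹ := by
    rw [intervalIntegral.integral_congr ec, intervalIntegral.integral_const, smul_eq_mul,
      one_div]
  by_cases hry : r ≤ y
  · -- case r ≤ y
    have ha0 : 0 ≤ a := div_nonneg (by linarith) h1r.le
    have hsa : Real.sqrt a * Real.sqrt (y * (1 - r)) = Real.sqrt (y * (y - r)) := by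
      rw [← Real.sqrt_mul ha0]
      congr 1
      rw [ha]; field_simp
    have ea : Set.EqOn (fun u => 1 / Real.sqrt (mru r u y)) (fun _ => 1 / Real.sqrt a)
        (Set.uIcc 0 a) := by
      intro u hu
      rw [Set.uIcc_of_le ha0] at hu
      simp only
      rw [hmru, min_eq_right (hu.2.trans hab), max_eq_left hu.2]
    have eb : Set.EqOn (fun u => 1 / Real.sqrt (mru r u y)) (fun u => u ^ (-(1/2) : ℝ))
        (Set.uIcc a b) := by
      intro u hu
      rw [Set.uIcc_of_le hab] at hu
      simp only
      rw [hmru, min_eq_right hu.2, max_eq_right hu.1, one_div_sqrt_eq_rpow]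
    have J1 : IntervalIntegrable (fun u => 1 / Real.sqrt (mru r u y)) MeasureTheory.volume 0 a :=
      hcongr _ _ _ ea intervalIntegrable_const
    have J2 : IntervalIntegrable (fun u => 1 / Real.sqrt (mru r u y)) MeasureTheory.volume a b :=
      hcongr _ _ _ eb (intervalIntegral.intervalIntegrable_rpow' (by norm_num))
    have I1 : (∫ u in (0:ℝ)..a, 1 / Real.sqrt (mru r u y)) = Real.sqrt a := by
      rw [intervalIntegral.integral_congr ea, intervalIntegral.integral_const, smul_eq_mul,
        sub_zero, mul_one_div, Real.div_sqrt]
    have I2 : (∫ u in a..b, 1 / Real.sqrt (mru r u y)) =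
        2 * Real.sqrt b - 2 * Real.sqrt a := by
      rw [intervalIntegral.integral_congr eb, integral_rpow (Or.inl (by norm_num))]
      rw [show (-(1/2):ℝ) + 1 = 1/2 by norm_num, ← Real.sqrt_eq_rpow, ← Real.sqrt_eq_rpow]
      ring
    rw [← intervalIntegral.integral_add_adjacent_intervals (J1.trans J2) J3,
      ← intervalIntegral.integral_add_adjacent_intervals J1 J2, I1, I2, I3, if_pos hry,
      eq_div_iff hsyr.ne']
    linear_combination 2 * e1 - hsa + (1 - b) * e3 - eb1
  · -- case y < r
    have ha0 : a ≤ 0 := by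
      rw [ha, div_nonpos_iff]; right; exact ⟨by linarith, h1r.le⟩
    have eb : Set.EqOn (fun u => 1 / Real.sqrt (mru r u y)) (fun u => u ^ (-(1/2) : ℝ))
        (Set.uIcc 0 b) := by
      intro u hu
      rw [Set.uIcc_of_le hb0.le] at hu
      simp only
      rw [hmru, min_eq_right hu.2, max_eq_right (ha0.trans hu.1), one_div_sqrt_eq_rpow]
    have J2 : IntervalIntegrable (fun u => 1 / Real.sqrt (mru r u y)) MeasureTheory.volume 0 b :=
      hcongr _ _ _ eb (intervalIntegral.intervalIntegrable_rpow' (by norm_num))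
    have I2 : (∫ u in (0:ℝ)..b, 1 / Real.sqrt (mru r u y)) = 2 * Real.sqrt b := by
      rw [intervalIntegral.integral_congr eb, integral_rpow (Or.inl (by norm_num))]
      rw [show (-(1/2):ℝ) + 1 = 1/2 by norm_num, ← Real.sqrt_eq_rpow, ← Real.sqrt_eq_rpow,
        Real.sqrt_zero]
      ring
    rw [← intervalIntegral.integral_add_adjacent_intervals J2 J3, I2, I3, if_neg hry,
      eq_div_iff hsyr.ne']
    linear_combination 2 * e1 + (1 - b) * e3 - eb1
end

section
/- Let $\kappa \in (0,1)$, $\eta > 0$, and $\theta = \frac{\kappa+\eta}{1+\eta}$. If $y \in \left[\frac{1-\kappa}{2}, \frac{1+\kappa}{2}\right]$, $r \in (\theta, 1)$, and $u \in \left[\frac{1-\eta}{2}, \frac{1+\eta}{2}\right]$, then $\frac{y-r}{1-r} < \frac{1-\eta}{2}$ and $\frac{y}{1-r} > \frac{1+\eta}{2}$, and hence $\mathrm{median}\left(\frac{y-r}{1-r}, \frac{y}{1-r}, u\right) = u$. -/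
theorem stmt17 (κ η θ y r u : ℝ) (hκ : κ ∈ Set.Ioo (0:ℝ) 1) (hη : 0 < η)
    (hθ : θ = (κ + η) / (1 + η))
    (hy : y ∈ Set.Icc ((1 - κ) / 2) ((1 + κ) / 2))
    (hr : r ∈ Set.Ioo θ 1)
    (hu : u ∈ Set.Icc ((1 - η) / 2) ((1 + η) / 2)) :
    (y - r) / (1 - r) < (1 - η) / 2 ∧ (1 + η) / 2 < y / (1 - r) ∧
      median ((y - r) / (1 - r)) (y / (1 - r)) u = u := by
  obtain ⟨hκ0, hκ1⟩ := hκ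
  obtain ⟨hy1, hy2⟩ := hy
  obtain ⟨hr1, hr2⟩ := hr
  obtain ⟨hu1, hu2⟩ := hu
  have hpos : (0:ℝ) < 1 - r := by linarith
  have hηpos : (0:ℝ) < 1 + η := by linarith
  have hrθ : (κ + η) < r * (1 + η) := by
    rw [hθ, div_lt_iff₀ hηpos] at hr1; linarith
  have h1 : (y - r) / (1 - r) < (1 - η) / 2 := by
    rw [div_lt_div_iff₀ hpos (by norm_num : (0:ℝ) < 2)]
    nlinarith
  have h2 : (1 + η) / 2 < y / (1 - r) := by
    rw [div_lt_div_iff₀ (by norm_num : (0:ℝ) < 2) hpos]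
    nlinarith
  refine ⟨h1, h2, ?_⟩
  have hab : (y - r) / (1 - r) < y / (1 - r) := by linarith
  unfold median
  rw [min_eq_left hab.le, max_eq_right hab.le,
    min_eq_right (by linarith), max_eq_right (by linarith)]
end

section
/- Let $b \ge \log 2$, $r \in (-1,1)$, $r \ne 0$, and $y \in (0, e^{-b}]$. Then $\frac{s_r(y)}{y} \le \frac{1}{\sqrt{(1+r)^2 - 4r e^{-b}\mathbf{1}_{\{r>0\}}}}$, and consequently $\log\frac{y}{s_r(y)} \ge \frac{1}{2}\log\left((1+r)^2 - 4re^{-b}\mathbf{1}_{\{r>0\}}\right)$. -/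
noncomputable def sr (r y : ℝ) : ℝ := (1 + r - Real.sqrt ((1 + r) ^ 2 - 4 * r * y)) / (2 * r)

theorem stmt19 (b r y : ℝ) (hb : Real.log 2 ≤ b) (hr : r ∈ Set.Ioo (-1:ℝ) 1) (hr0 : r ≠ 0)
    (hy : y ∈ Set.Ioc (0:ℝ) (Real.exp (-b))) :
    sr r y / y ≤
        1 / Real.sqrt ((1 + r) ^ 2 - 4 * r * Real.exp (-b) * (if 0 < r then 1 else 0)) ∧
      (1 / 2) * Real.log ((1 + r) ^ 2 - 4 * r * Real.exp (-b) * (if 0 < r then 1 else 0)) ≤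
        Real.log (y / sr r y) := by
  obtain ⟨hy0, hyb⟩ := hy
  obtain ⟨hr1, hr2⟩ := hr
  have he2 : Real.exp (-b) ≤ 1/2 := by
    have h := Real.exp_le_exp.2 (neg_le_neg hb)
    rw [Real.exp_neg (Real.log 2), Real.exp_log (by norm_num : (0:ℝ) < 2)] at h
    linarith
  have hy2 : y ≤ 1/2 := le_trans hyb he2
  set D := (1 + r) ^ 2 - 4 * r * y with hD_def
  have hr1' : 0 < 1 + r := by linarith
  have hDpos : 0 < D := by
    rcases lt_or_gt_of_ne hr0 with h | h
    · nlinarith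
    · nlinarith
  have hsqD : Real.sqrt D ^ 2 = D := Real.sq_sqrt hDpos.le
  have hsD : 0 ≤ Real.sqrt D := Real.sqrt_nonneg D
  have hden : 0 < 1 + r + Real.sqrt D := by linarith
  have hs : sr r y = 2 * y / (1 + r + Real.sqrt D) := by
    rw [sr]
    rw [div_eq_div_iff (by simpa using hr0) hden.ne']
    nlinarith [hsqD]
  have hsy : sr r y / y = 2 / (1 + r + Real.sqrt D) := by
    rw [hs]
    field_simp
  have hys : y / sr r y = (1 + r + Real.sqrt D) / 2 := by
    rw [hs]
    field_simp
  set C := (1 + r) ^ 2 - 4 * r * Real.exp (-b) * (if 0 < r then 1 else 0) with hC_def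
  have hCpos : 0 < C ∧ C ≤ D ∧ Real.sqrt C ≤ 1 + r := by
    by_cases hrp : 0 < r
    · have hC_eq : C = (1 + r) ^ 2 - 4 * r * Real.exp (-b) := by
        rw [hC_def, if_pos hrp]; ring
      have hepos : 0 < Real.exp (-b) := Real.exp_pos _
      refine ⟨by nlinarith, by nlinarith, ?_⟩
      have : C ≤ (1 + r) ^ 2 := by nlinarith
      calc Real.sqrt C ≤ Real.sqrt ((1 + r) ^ 2) := Real.sqrt_le_sqrt this
        _ = 1 + r := Real.sqrt_sq hr1'.le
    · have hrn : r < 0 := lt_of_le_of_ne (not_lt.1 hrp) hr0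
      have hC_eq : C = (1 + r) ^ 2 := by rw [hC_def, if_neg hrp]; ring
      refine ⟨by nlinarith, by nlinarith, ?_⟩
      rw [hC_eq, Real.sqrt_sq hr1'.le]
  obtain ⟨hC0, hCD, hC1⟩ := hCpos
  have hsCsD : Real.sqrt C ≤ Real.sqrt D := Real.sqrt_le_sqrt hCD
  have hsC0 : 0 < Real.sqrt C := Real.sqrt_pos.2 hC0
  constructor
  · rw [hsy, div_le_div_iff₀ hden hsC0]
    linarith
  · rw [hys]
    have h1 : Real.sqrt C ≤ (1 + r + Real.sqrt D) / 2 := by linarith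
    have h2 : Real.log (Real.sqrt C) ≤ Real.log ((1 + r + Real.sqrt D) / 2) :=
      Real.log_le_log hsC0 h1
    rw [Real.log_sqrt hC0.le] at h2
    linarith
end
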